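/- Define d on the vertices of L_{k,n} by d(A,B) = 2⌈(k - |A∩B|)/(n-2k)⌉ + 1 if |A| ≠ |B|, and d(A,B) = 2⌈(|A| - |A∩B|)/(n-2k)⌉ if |A| = |B|. Then d satisfies the triangle inequality: d(A,B) + d(B,C) ≥ d(A,C) for all vertices A, B, C. -/

import Mathlib

/-- Vertices of the level graph: k-element and (n-k)-element subsets of {1,…,n}. -/
def LevelVert (n k : ℕ) := {A : Finset (Fin n) // A.card = k ∨ A.card = n - k}

/-- The (k,n)-level graph L_{k,n}. -/
def levelGraph (n k : ℕ) : SimpleGraph (LevelVert n k) where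
  Adj A B := A ≠ B ∧
    ((A.1.card = k ∧ B.1.card = n - k ∧ A.1 ⊆ B.1) ∨
     (B.1.card = k ∧ A.1.card = n - k ∧ B.1 ⊆ A.1))
  symm := ⟨by intro A B h; exact ⟨Ne.symm h.1, h.2.elim Or.inr Or.inl⟩⟩
  loopless := ⟨by intro A h; exact h.1 rfl⟩

/-- The initial vertex P = {1,…,k} (as a subset of Fin n). -/
def Pset (n k : ℕ) : Finset (Fin n) := Finset.univ.filter (fun x => (x : ℕ) < k)

/-- The distance function d on vertices of the level graph. -/
def dFun (n k : ℕ) (A B : LevelVert n k) : ℕ :=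
  if A.1.card = B.1.card then
    2 * ((A.1.card - (A.1 ∩ B.1).card + (n - 2 * k) - 1) / (n - 2 * k))
  else
    2 * ((k - (A.1 ∩ B.1).card + (n - 2 * k) - 1) / (n - 2 * k)) + 1

private lemma ceil_le_mul (m : ℕ) (hm : 0 < m) (x : ℕ) : x ≤ m * ((x + m - 1) / m) := by
  have h1 := Nat.div_add_mod (x + m - 1) m
  have h2 := Nat.mod_lt (x + m - 1) hm
  omega

private lemma tri_even (m : ℕ) (hm : 0 < m) {u v w : ℕ} (h : u ≤ v + w) :
    (u + m - 1) / m ≤ (v + m - 1) / m + (w + m - 1) / m := by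
  have h1 := ceil_le_mul m hm v
  have h2 := ceil_le_mul m hm w
  have h3 : u + m - 1 < ((v + m - 1) / m + (w + m - 1) / m + 1) * m := by
    have he : ((v + m - 1) / m + (w + m - 1) / m + 1) * m
        = m * ((v + m - 1) / m) + m * ((w + m - 1) / m) + m := by ring
    omega
  exact Nat.lt_succ_iff.mp ((Nat.div_lt_iff_lt_mul hm).mpr h3)

private lemma tri_odd (m : ℕ) (hm : 0 < m) {u v w : ℕ} (h : u ≤ v + w + m) :
    (u + m - 1) / m ≤ (v + m - 1) / m + (w + m - 1) / m + 1 := by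
  have h0 : (u + m - 1) / m ≤ (v + (w + m) + m - 1) / m :=
    Nat.div_le_div_right (by omega)
  have h1 : (v + (w + m) + m - 1) / m ≤ (v + m - 1) / m + (w + m + m - 1) / m :=
    tri_even m hm le_rfl
  have h2 : (w + m + m - 1) / m = (w + m - 1) / m + 1 := by
    rw [show w + m + m - 1 = (w + m - 1) + m by omega, Nat.add_div_right _ hm]
  omega

private lemma inter_card_key {n : ℕ} (A B C : Finset (Fin n)) :
    (A ∩ B).card + (B ∩ C).card ≤ B.card + (A ∩ C).card := by
  have h := Finset.card_union_add_card_inter (A ∩ B) (B ∩ C)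
  have h1 : ((A ∩ B) ∪ (B ∩ C)).card ≤ B.card :=
    Finset.card_le_card (by intro x hx; simp only [Finset.mem_union, Finset.mem_inter] at hx ⊢; tauto)
  have h2 : ((A ∩ B) ∩ (B ∩ C)).card ≤ (A ∩ C).card :=
    Finset.card_le_card (by intro x hx; simp only [Finset.mem_inter] at hx ⊢; tauto)
  omega

theorem dFun_triangle (n k : ℕ) (hk : k < n - k) :
    ∀ A B C : LevelVert n k, dFun n k A B + dFun n k B C ≥ dFun n k A C := by
  rintro ⟨A, hA⟩ ⟨B, hB⟩ ⟨C, hC⟩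
  have hm : 0 < n - 2 * k := by omega
  have hpA : (A ∩ B).card ≤ A.card := Finset.card_le_card Finset.inter_subset_left
  have hpB : (A ∩ B).card ≤ B.card := Finset.card_le_card Finset.inter_subset_right
  have hqB : (B ∩ C).card ≤ B.card := Finset.card_le_card Finset.inter_subset_left
  have hqC : (B ∩ C).card ≤ C.card := Finset.card_le_card Finset.inter_subset_right
  have hrA : (A ∩ C).card ≤ A.card := Finset.card_le_card Finset.inter_subset_left
  have hrC : (A ∩ C).card ≤ C.card := Finset.card_le_card Finset.inter_subset_right
  have hkey := inter_card_key A B C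
  simp only [dFun, ge_iff_le]
  split_ifs
  · have := tri_even (n - 2 * k) hm (show A.card - (A ∩ C).card ≤
      (A.card - (A ∩ B).card) + (B.card - (B ∩ C).card) by omega)
    linarith
  · omega
  · omega
  · have := tri_odd (n - 2 * k) hm (show A.card - (A ∩ C).card ≤
      (k - (A ∩ B).card) + (k - (B ∩ C).card) + (n - 2 * k) by omega)
    linarith
  · omega
  · have := tri_even (n - 2 * k) hm (show k - (A ∩ C).card ≤
      (A.card - (A ∩ B).card) + (k - (B ∩ C).card) by omega)
    linarith
  · have := tri_even (n - 2 * k) hm (show k - (A ∩ C).card ≤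
      (k - (A ∩ B).card) + (B.card - (B ∩ C).card) by omega)
    linarith
  · omega
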